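/- Let α > 0 (Poisson parameter) and let λ ∈ ℝ, λ ≠ 0. Set e := Exp∘(α·(e_λ - 1)) - 1 ∈ ℝ⟦X⟧ and ē := Λ_λ∘(α^{-1}·L) ∈ ℝ⟦X⟧. Then for all natural numbers n ≥ k: c_n( e^k / k! ) = Σ_{j=k}^{n} α^j·S₂(j,k)·S_{2,λ}(n,j) and c_n( ē^k / k! ) = Σ_{j=k}^{n} α^{-j}·S_{1,λ}(j,k)·S₁(n,j). -/

import Mathlib

open PowerSeries Finset

noncomputable section

/-- `cN n F = n! * (coefficient of X^n in F)`. -/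
def cN (n : ℕ) (F : PowerSeries ℝ) : ℝ := (n.factorial : ℝ) * PowerSeries.coeff n F

/-- Formal substitution `F ∘ G` (faithful when `G` has zero constant coefficient). -/
def pcomp (F G : PowerSeries ℝ) : PowerSeries ℝ :=
  PowerSeries.mk fun n =>
    ∑ k ∈ Finset.range (n + 1), (PowerSeries.coeff k F) * (PowerSeries.coeff n (G ^ k))

/-- The formal series of log(1+X). -/
def L : PowerSeries ℝ := PowerSeries.mk fun n => if n = 0 then 0 else (-1 : ℝ) ^ (n - 1) / n

/-- Falling factorial `(y)_m`. -/
def ff (y : ℝ) (m : ℕ) : ℝ := ∏ i ∈ Finset.range m, (y - i)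

/-- Rising factorial `⟨y⟩_m`. -/
def rf (y : ℝ) (m : ℕ) : ℝ := ∏ i ∈ Finset.range m, (y + i)

/-- Degenerate falling factorial `(x)_{n,λ}`. -/
def ffl (x : ℝ) (n : ℕ) (lam : ℝ) : ℝ := ∏ i ∈ Finset.range n, (x - i * lam)

/-- Stirling numbers of the second kind. -/
def S2 (n k : ℕ) : ℝ :=
  (k.factorial : ℝ)⁻¹ * ∑ j ∈ Finset.range (k + 1), (-1 : ℝ) ^ (k - j) * (k.choose j) * (j : ℝ) ^ n

/-- The falling factorial polynomial `x(x-1)⋯(x-n+1)`. -/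
def fallingPoly (n : ℕ) : Polynomial ℝ := ∏ i ∈ Finset.range n, (Polynomial.X - Polynomial.C (i : ℝ))

/-- (Signed) Stirling numbers of the first kind. -/
def S1 (n k : ℕ) : ℝ := (fallingPoly n).coeff k

/-- Degenerate Stirling numbers of the second kind. -/
def S2d (lam : ℝ) (n k : ℕ) : ℝ :=
  (k.factorial : ℝ)⁻¹ *
    ∑ j ∈ Finset.range (k + 1), (-1 : ℝ) ^ (k - j) * (k.choose j) * ffl (j : ℝ) n lam

/-- Formal degenerate exponential `e_λ`. -/
def degExp (lam : ℝ) : PowerSeries ℝ := PowerSeries.mk fun n => ffl 1 n lam / n.factorial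

/-- Formal degenerate logarithm `Λ_λ` of `1+X`. -/
def degLog (lam : ℝ) : PowerSeries ℝ :=
  lam⁻¹ • PowerSeries.mk fun n => if n = 0 then 0 else ff lam n / n.factorial

/-- Degenerate Stirling numbers of the first kind. -/
def S1d (lam : ℝ) (n k : ℕ) : ℝ := cN n ((k.factorial : ℝ)⁻¹ • (degLog lam) ^ k)

/-- Binomial series `(1+X)^c`. -/
def binser (c : ℝ) : PowerSeries ℝ := PowerSeries.mk fun n => ff c n / n.factorial

/-- Frobenius–Euler numbers of order `j`. -/
def FE (u : ℝ) (j n : ℕ) : ℝ :=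
  cN n (((1 - u) • (PowerSeries.exp ℝ - PowerSeries.C u)⁻¹) ^ j)

/-! ### Auxiliary lemmas -/

lemma coeff_pcomp (F G : PowerSeries ℝ) (n : ℕ) :
    PowerSeries.coeff n (pcomp F G) =
      ∑ k ∈ Finset.range (n + 1), (PowerSeries.coeff k F) * (PowerSeries.coeff n (G ^ k)) :=
  coeff_mk _ _

lemma coeff_pow_of_lt {G : PowerSeries ℝ} (hG : PowerSeries.constantCoeff G = 0)
    {m k : ℕ} (h : m < k) : PowerSeries.coeff m (G ^ k) = 0 := by
  have hd : (X : PowerSeries ℝ) ^ k ∣ G ^ k :=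
    pow_dvd_pow_of_dvd (PowerSeries.X_dvd_iff.mpr hG) k
  exact PowerSeries.X_pow_dvd_iff.mp hd m h

lemma coeff_pcomp_eq_aeval (F G : PowerSeries ℝ) (n : ℕ) :
    PowerSeries.coeff n (pcomp F G) =
      PowerSeries.coeff n (Polynomial.aeval G (trunc (n + 1) F)) := by
  rw [coeff_pcomp, Polynomial.aeval_eq_sum_range' (natDegree_trunc_lt F n) G, map_sum]
  refine Finset.sum_congr rfl fun k hk => ?_
  rw [coeff_trunc, if_pos (Finset.mem_range.mp hk), LinearMap.map_smul, smul_eq_mul]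

lemma coeff_aeval_congr {G : PowerSeries ℝ} (hG : PowerSeries.constantCoeff G = 0)
    {n : ℕ} {P Q : Polynomial ℝ} (h : ∀ i ≤ n, P.coeff i = Q.coeff i) :
    PowerSeries.coeff n (Polynomial.aeval G P) = PowerSeries.coeff n (Polynomial.aeval G Q) := by
  have hdvd : Polynomial.X ^ (n + 1) ∣ P - Q := by
    rw [Polynomial.X_pow_dvd_iff]
    intro d hd
    rw [Polynomial.coeff_sub, h d (Nat.lt_succ_iff.mp hd), sub_self]
  obtain ⟨R, hR⟩ := hdvd
  have key : Polynomial.aeval G P - Polynomial.aeval G Q = G ^ (n + 1) * Polynomial.aeval G R := by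
    rw [← map_sub, hR, map_mul, map_pow, Polynomial.aeval_X]
  have h0 : PowerSeries.coeff n (G ^ (n + 1) * Polynomial.aeval G R) = 0 := by
    rw [PowerSeries.coeff_mul]
    refine Finset.sum_eq_zero fun p hp => ?_
    have hpn : p.1 ≤ n := by
      have := Finset.HasAntidiagonal.mem_antidiagonal.mp hp; omega
    rw [coeff_pow_of_lt hG (Nat.lt_succ_of_le hpn), zero_mul]
  have := congrArg (PowerSeries.coeff n) key
  rw [map_sub, h0] at this
  linarith

lemma coeff_aeval_trunc_pcomp {G : PowerSeries ℝ} (hG : PowerSeries.constantCoeff G = 0)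
    (F : PowerSeries ℝ) {i m : ℕ} (him : i < m) :
    PowerSeries.coeff i (Polynomial.aeval G (trunc m F)) = PowerSeries.coeff i (pcomp F G) := by
  rw [coeff_pcomp_eq_aeval]
  refine coeff_aeval_congr hG fun d hd => ?_
  rw [coeff_trunc, coeff_trunc, if_pos (by omega), if_pos (by omega)]

lemma coeff_mul_congr {f f' g g' : PowerSeries ℝ} {n : ℕ}
    (hf : ∀ i ≤ n, PowerSeries.coeff i f = PowerSeries.coeff i f')
    (hg : ∀ i ≤ n, PowerSeries.coeff i g = PowerSeries.coeff i g') :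
    PowerSeries.coeff n (f * g) = PowerSeries.coeff n (f' * g') := by
  rw [PowerSeries.coeff_mul, PowerSeries.coeff_mul]
  refine Finset.sum_congr rfl fun p hp => ?_
  have := Finset.HasAntidiagonal.mem_antidiagonal.mp hp
  rw [hf p.1 (by omega), hg p.2 (by omega)]

lemma pcomp_mul {G : PowerSeries ℝ} (hG : PowerSeries.constantCoeff G = 0)
    (F₁ F₂ : PowerSeries ℝ) : pcomp (F₁ * F₂) G = pcomp F₁ G * pcomp F₂ G := by
  ext n
  rw [coeff_pcomp_eq_aeval]
  have h1 : PowerSeries.coeff n (Polynomial.aeval G (trunc (n + 1) (F₁ * F₂))) =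
      PowerSeries.coeff n (Polynomial.aeval G (trunc (n + 1) F₁ * trunc (n + 1) F₂)) := by
    refine coeff_aeval_congr hG fun i hi => ?_
    rw [coeff_trunc, if_pos (by omega)]
    have := coeff_mul_eq_coeff_trunc_mul_trunc F₁ F₂ (show i < n + 1 by omega)
    rw [this, ← Polynomial.coe_mul, Polynomial.coeff_coe]
  rw [h1, map_mul]
  exact coeff_mul_congr
    (fun i hi => coeff_aeval_trunc_pcomp hG F₁ (by omega))
    (fun i hi => coeff_aeval_trunc_pcomp hG F₂ (by omega))

lemma pcomp_one (G : PowerSeries ℝ) : pcomp 1 G = 1 := by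
  ext n
  rw [coeff_pcomp, Finset.sum_eq_single 0]
  · simp
  · intro k _ hk
    simp [PowerSeries.coeff_one, hk]
  · simp

lemma pcomp_pow {G : PowerSeries ℝ} (hG : PowerSeries.constantCoeff G = 0)
    (F : PowerSeries ℝ) (k : ℕ) : pcomp (F ^ k) G = (pcomp F G) ^ k := by
  induction k with
  | zero => simpa using pcomp_one G
  | succ m ih => rw [pow_succ, pcomp_mul hG, ih, pow_succ]

lemma pcomp_sub (F₁ F₂ G : PowerSeries ℝ) : pcomp (F₁ - F₂) G = pcomp F₁ G - pcomp F₂ G := by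
  ext n
  simp only [coeff_pcomp, map_sub, sub_mul, Finset.sum_sub_distrib]

/-! ### ODE machinery -/

lemma coeff_one_add_X_mul_zero (f : PowerSeries ℝ) :
    PowerSeries.coeff 0 ((1 + X) * f) = PowerSeries.coeff 0 f := by
  rw [add_mul, one_mul, map_add, PowerSeries.coeff_zero_X_mul, add_zero]

lemma coeff_one_add_X_mul_succ (f : PowerSeries ℝ) (n : ℕ) :
    PowerSeries.coeff (n + 1) ((1 + X) * f) =
      PowerSeries.coeff (n + 1) f + PowerSeries.coeff n f := by
  rw [add_mul, one_mul, map_add, PowerSeries.coeff_succ_X_mul]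

lemma ode_coeff {f h : PowerSeries ℝ}
    (hode : (1 + X) * PowerSeries.derivative ℝ f = h) (n : ℕ) :
    ((n : ℝ) + 1) * PowerSeries.coeff (n + 1) f + (n : ℝ) * PowerSeries.coeff n f =
      PowerSeries.coeff n h := by
  subst hode
  cases n with
  | zero =>
      rw [coeff_one_add_X_mul_zero, PowerSeries.coeff_derivative]
      push_cast; ring
  | succ m =>
      rw [coeff_one_add_X_mul_succ, PowerSeries.coeff_derivative, PowerSeries.coeff_derivative]
      push_cast; ring

lemma ode_unique {f : PowerSeries ℝ} {c : ℝ} (h0 : PowerSeries.coeff 0 f = 1)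
    (hode : (1 + X) * PowerSeries.derivative ℝ f = PowerSeries.C c * f) (n : ℕ) :
    PowerSeries.coeff n f = ff c n / n.factorial := by
  induction n with
  | zero => simpa [ff] using h0
  | succ m ih =>
      have h := ode_coeff hode m
      rw [PowerSeries.coeff_C_mul, ih] at h
      have hm1 : ((m : ℝ) + 1) ≠ 0 := by positivity
      have hfac : ((m.factorial : ℝ)) ≠ 0 := Nat.cast_ne_zero.mpr m.factorial_ne_zero
      have hff : ff c (m + 1) = ff c m * (c - m) := by
        rw [ff, ff, Finset.prod_range_succ]
      rw [hff, Nat.factorial_succ]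
      push_cast
      field_simp at h ⊢
      linarith [h]

lemma coeff_binser (c : ℝ) (n : ℕ) :
    PowerSeries.coeff n (binser c) = ff c n / n.factorial := coeff_mk _ _

lemma ff_succ (c : ℝ) (n : ℕ) : ff c (n + 1) = ff c n * (c - n) := by
  rw [ff, ff, Finset.prod_range_succ]

lemma ode_binser (c : ℝ) :
    (1 + X) * PowerSeries.derivative ℝ (binser c) = PowerSeries.C c * binser c := by
  ext n
  rw [PowerSeries.coeff_C_mul, coeff_binser]
  cases n with
  | zero =>
      rw [coeff_one_add_X_mul_zero, PowerSeries.coeff_derivative, coeff_binser, ff_succ]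
      simp [ff]
  | succ m =>
      rw [coeff_one_add_X_mul_succ, PowerSeries.coeff_derivative, PowerSeries.coeff_derivative,
        coeff_binser, coeff_binser, ff_succ c (m + 1), ff_succ c m]
      have h1 : ((m.factorial : ℝ)) ≠ 0 := Nat.cast_ne_zero.mpr m.factorial_ne_zero
      have h2 : ((m : ℝ) + 1) ≠ 0 := by positivity
      have h3 : ((m : ℝ) + 2) ≠ 0 := by positivity
      rw [Nat.factorial_succ, Nat.factorial_succ]
      push_cast
      field_simp
      ring

lemma binser_mul (a b : ℝ) : binser a * binser b = binser (a + b) := by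
  have h0 : PowerSeries.coeff 0 (binser a * binser b) = 1 := by
    rw [PowerSeries.coeff_zero_eq_constantCoeff, map_mul]
    have ha := coeff_binser a 0
    have hb := coeff_binser b 0
    rw [PowerSeries.coeff_zero_eq_constantCoeff] at ha hb
    rw [ha, hb]
    simp [ff]
  have hode : (1 + X) * PowerSeries.derivative ℝ (binser a * binser b) =
      PowerSeries.C (a + b) * (binser a * binser b) := by
    rw [Derivation.leibniz]
    simp only [smul_eq_mul]
    have := ode_binser a
    have := ode_binser b
    calc (1 + X) * (binser a * PowerSeries.derivative ℝ (binser b) +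
            binser b * PowerSeries.derivative ℝ (binser a))
        = binser a * ((1 + X) * PowerSeries.derivative ℝ (binser b)) +
            binser b * ((1 + X) * PowerSeries.derivative ℝ (binser a)) := by ring
      _ = binser a * (PowerSeries.C b * binser b) +
            binser b * (PowerSeries.C a * binser a) := by rw [ode_binser a, ode_binser b]
      _ = PowerSeries.C (a + b) * (binser a * binser b) := by rw [map_add]; ring
  ext n
  rw [ode_unique h0 hode n, coeff_binser]

lemma binser_zero : binser 0 = 1 := by
  ext n
  rw [coeff_binser]
  cases n with
  | zero => simp [ff]
  | succ m =>
      have : ff 0 (m + 1) = 0 := by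
        refine Finset.prod_eq_zero (Finset.mem_range.mpr (Nat.succ_pos m)) ?_
        simp
      rw [this]
      simp [PowerSeries.coeff_one]

lemma binser_pow (c : ℝ) (m : ℕ) : binser c ^ m = binser (m * c) := by
  induction m with
  | zero => simpa using binser_zero.symm
  | succ p ih =>
      rw [pow_succ, ih, binser_mul]
      push_cast
      ring_nf

/-! ### Degenerate exponential -/

lemma ffl_eq {lam : ℝ} (hlam : lam ≠ 0) (x : ℝ) (n : ℕ) :
    ffl x n lam = lam ^ n * ff (x / lam) n := by
  rw [ffl, ff,
    show lam ^ n = ∏ _i ∈ Finset.range n, lam from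
      ((Finset.prod_const lam).trans (by rw [Finset.card_range])).symm,
    ← Finset.prod_mul_distrib]
  refine Finset.prod_congr rfl fun i _ => ?_
  field_simp

lemma degExp_eq {lam : ℝ} (hlam : lam ≠ 0) : degExp lam = rescale lam (binser lam⁻¹) := by
  ext n
  rw [degExp, coeff_mk, coeff_rescale, coeff_binser, ffl_eq hlam]
  rw [one_div, mul_div_assoc]

lemma coeff_degExp_pow {lam : ℝ} (hlam : lam ≠ 0) (m n : ℕ) :
    PowerSeries.coeff n (degExp lam ^ m) = ffl m n lam / n.factorial := by
  rw [degExp_eq hlam, ← map_pow, binser_pow, coeff_rescale, coeff_binser, ffl_eq hlam]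
  rw [div_eq_mul_inv ((m : ℕ) : ℝ) lam]
  ring

lemma coeff_exp_pow (m n : ℕ) :
    PowerSeries.coeff n (PowerSeries.exp ℝ ^ m) = (m : ℝ) ^ n / n.factorial := by
  rw [PowerSeries.exp_pow_eq_rescale_exp, coeff_rescale, PowerSeries.coeff_exp]
  have : (algebraMap ℚ ℝ) (1 / n.factorial) = 1 / (n.factorial : ℝ) := by
    push_cast [map_div₀]
    simp
  rw [this]
  ring

/-! ### (f - 1)^k expansions -/

lemma coeff_sub_one_pow (f : PowerSeries ℝ) (k j : ℕ) :
    PowerSeries.coeff j ((f - 1) ^ k) =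
      ∑ m ∈ Finset.range (k + 1),
        (-1 : ℝ) ^ (k - m) * (k.choose m : ℝ) * PowerSeries.coeff j (f ^ m) := by
  rw [sub_pow f 1 k, map_sum]
  refine Finset.sum_congr rfl fun m hm => ?_
  have hmk : m ≤ k := Nat.lt_succ_iff.mp (Finset.mem_range.mp hm)
  have hsgn : ((-1 : PowerSeries ℝ)) ^ (m + k) = PowerSeries.C ((-1 : ℝ) ^ (k - m)) := by
    rw [show m + k = (k - m) + 2 * m by omega, pow_add, pow_mul]
    norm_num [map_pow]
  have : (-1 : PowerSeries ℝ) ^ (m + k) * f ^ m * 1 ^ (k - m) * (k.choose m : PowerSeries ℝ) =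
      PowerSeries.C ((-1 : ℝ) ^ (k - m) * (k.choose m : ℝ)) * f ^ m := by
    rw [hsgn, one_pow, map_mul, map_natCast]
    ring
  rw [this, PowerSeries.coeff_C_mul]


lemma coeff_expm1_pow (k j : ℕ) :
    PowerSeries.coeff j ((PowerSeries.exp ℝ - 1) ^ k) =
      (k.factorial : ℝ) * S2 j k / j.factorial := by
  rw [coeff_sub_one_pow]
  simp only [coeff_exp_pow]
  have hk : ((k.factorial : ℝ)) ≠ 0 := Nat.cast_ne_zero.mpr k.factorial_ne_zero
  have hS : ∀ S : ℝ, (k.factorial : ℝ) * ((k.factorial : ℝ)⁻¹ * S) / j.factorial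
      = S / j.factorial := fun S => by rw [mul_inv_cancel_left₀ hk]
  rw [S2, hS, Finset.sum_div]
  exact Finset.sum_congr rfl fun m _ => (mul_div_assoc _ _ _).symm

lemma coeff_degExpm1_pow {lam : ℝ} (hlam : lam ≠ 0) (j n : ℕ) :
    PowerSeries.coeff n ((degExp lam - 1) ^ j) =
      (j.factorial : ℝ) * S2d lam n j / n.factorial := by
  rw [coeff_sub_one_pow]
  simp only [coeff_degExp_pow hlam]
  have hj : ((j.factorial : ℝ)) ≠ 0 := Nat.cast_ne_zero.mpr j.factorial_ne_zero
  have hS : ∀ S : ℝ, (j.factorial : ℝ) * ((j.factorial : ℝ)⁻¹ * S) / n.factorial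
      = S / n.factorial := fun S => by rw [mul_inv_cancel_left₀ hj]
  rw [S2d, hS, Finset.sum_div]
  exact Finset.sum_congr rfl fun m _ => (mul_div_assoc _ _ _).symm

lemma constantCoeff_expm1 : PowerSeries.constantCoeff (PowerSeries.exp ℝ - 1) = 0 := by
  rw [map_sub, PowerSeries.constantCoeff_exp, map_one, sub_self]

lemma constantCoeff_degExpm1 (lam : ℝ) :
    PowerSeries.constantCoeff (degExp lam - 1) = 0 := by
  rw [map_sub, map_one, degExp, PowerSeries.constantCoeff_mk]
  simp [ffl]

lemma S2_eq_zero {j k : ℕ} (h : j < k) : S2 j k = 0 := by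
  have h1 : PowerSeries.coeff j ((PowerSeries.exp ℝ - 1) ^ k) = 0 :=
    coeff_pow_of_lt constantCoeff_expm1 h
  have h2 := coeff_expm1_pow k j
  rw [h1] at h2
  have hk : ((k.factorial : ℝ)) ≠ 0 := Nat.cast_ne_zero.mpr k.factorial_ne_zero
  have hj : ((j.factorial : ℝ)) ≠ 0 := Nat.cast_ne_zero.mpr j.factorial_ne_zero
  have h3 : (k.factorial : ℝ) * S2 j k = 0 := by
    have h4 := h2.symm
    rwa [div_eq_iff hj, zero_mul] at h4
  rcases mul_eq_zero.mp h3 with h4 | h4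
  · exact absurd h4 hk
  · exact h4

/-! ### The logarithm series -/

lemma coeff_L (n : ℕ) :
    PowerSeries.coeff n L = if n = 0 then 0 else (-1 : ℝ) ^ (n - 1) / n := coeff_mk _ _

lemma constantCoeff_L : PowerSeries.constantCoeff L = 0 := by
  rw [L, PowerSeries.constantCoeff_mk]; simp

lemma ode_L : (1 + X) * PowerSeries.derivative ℝ L = 1 := by
  ext n
  cases n with
  | zero =>
      rw [coeff_one_add_X_mul_zero, PowerSeries.coeff_derivative, coeff_L]
      simp
  | succ m =>
      rw [coeff_one_add_X_mul_succ, PowerSeries.coeff_derivative, PowerSeries.coeff_derivative,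
        coeff_L, coeff_L]
      have h1 : ((m : ℝ) + 1) ≠ 0 := by positivity
      have h2 : ((m : ℝ) + 1 + 1) ≠ 0 := by positivity
      simp only [Nat.succ_ne_zero, if_false, Nat.add_sub_cancel]
      rw [PowerSeries.coeff_one, if_neg (Nat.succ_ne_zero m)]
      push_cast
      field_simp
      ring

lemma coeff_L_pow_rec (j n : ℕ) :
    ((n : ℝ) + 1) * PowerSeries.coeff (n + 1) (L ^ (j + 1)) +
        (n : ℝ) * PowerSeries.coeff n (L ^ (j + 1)) =
      ((j : ℝ) + 1) * PowerSeries.coeff n (L ^ j) := by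
  have hD : PowerSeries.derivative ℝ (L ^ (j + 1)) =
      (j + 1) • (L ^ j • PowerSeries.derivative ℝ L) := by
    have := Derivation.leibniz_pow (PowerSeries.derivative ℝ) (a := L) (j + 1)
    simpa using this
  have hode : (1 + X) * PowerSeries.derivative ℝ (L ^ (j + 1)) = (j + 1) • (L ^ j) := by
    rw [hD]
    rw [smul_eq_mul (α := PowerSeries ℝ)]
    rw [mul_smul_comm]
    rw [show (1 + X) * (L ^ j * PowerSeries.derivative ℝ L)
        = L ^ j * ((1 + X) * PowerSeries.derivative ℝ L) from by ring, ode_L, mul_one]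
  have h := ode_coeff hode n
  rw [map_nsmul, nsmul_eq_mul] at h
  push_cast at h
  push_cast
  linarith

lemma fallingPoly_succ (n : ℕ) :
    fallingPoly (n + 1) = fallingPoly n * (Polynomial.X - Polynomial.C (n : ℝ)) := by
  rw [fallingPoly, fallingPoly, Finset.prod_range_succ]

lemma S1_succ_succ (n j : ℕ) : S1 (n + 1) (j + 1) = S1 n j - (n : ℝ) * S1 n (j + 1) := by
  rw [S1, S1, S1, fallingPoly_succ, mul_sub, Polynomial.coeff_sub, Polynomial.coeff_mul_X,
    Polynomial.coeff_mul_C]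
  ring

lemma S1_succ_zero (n : ℕ) : S1 (n + 1) 0 = 0 := by
  have hX : Polynomial.X ∣ fallingPoly (n + 1) := by
    have h0 : (0 : ℕ) ∈ Finset.range (n + 1) := Finset.mem_range.mpr (Nat.succ_pos n)
    have := Finset.dvd_prod_of_mem
      (fun i : ℕ => Polynomial.X - Polynomial.C (i : ℝ)) h0
    simpa [fallingPoly] using this
  rw [S1]
  exact Polynomial.X_dvd_iff.mp hX

lemma S1_zero (j : ℕ) : S1 0 j = if j = 0 then 1 else 0 := by
  rw [S1, fallingPoly]
  simp [Polynomial.coeff_one]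

lemma coeff_L_pow : ∀ n j : ℕ,
    PowerSeries.coeff n (L ^ j) = (j.factorial : ℝ) * S1 n j / n.factorial := by
  intro n
  induction n with
  | zero =>
      intro j
      rw [PowerSeries.coeff_zero_eq_constantCoeff, map_pow, constantCoeff_L, S1_zero]
      cases j with
      | zero => simp
      | succ m => simp [zero_pow (Nat.succ_ne_zero m)]
  | succ m ih =>
      intro j
      cases j with
      | zero =>
          rw [pow_zero, S1_succ_zero]
          simp [PowerSeries.coeff_one]
      | succ p =>
          have h := coeff_L_pow_rec p m
          rw [ih p, ih (p + 1)] at h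
          have hm1 : ((m : ℝ) + 1) ≠ 0 := by positivity
          have hmf : ((m.factorial : ℝ)) ≠ 0 := Nat.cast_ne_zero.mpr m.factorial_ne_zero
          rw [S1_succ_succ, Nat.factorial_succ m, Nat.factorial_succ p]
          push_cast
          push_cast [Nat.factorial_succ p] at h
          field_simp at h ⊢
          linarith

lemma S1d_eq (lam : ℝ) (j k : ℕ) :
    S1d lam j k = (j.factorial : ℝ) * ((k.factorial : ℝ)⁻¹ * PowerSeries.coeff j (degLog lam ^ k)) := by
  rw [S1d, cN, PowerSeries.coeff_smul, smul_eq_mul]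

lemma constantCoeff_degLog (lam : ℝ) : PowerSeries.constantCoeff (degLog lam) = 0 := by
  rw [degLog]
  rw [← PowerSeries.coeff_zero_eq_constantCoeff, PowerSeries.coeff_smul, coeff_mk]
  simp

lemma S1d_eq_zero (lam : ℝ) {j k : ℕ} (h : j < k) : S1d lam j k = 0 := by
  rw [S1d_eq, coeff_pow_of_lt (constantCoeff_degLog lam) h]
  ring

/-! ### Main theorem -/

theorem stmt7 (α lam : ℝ) (hα : 0 < α) (hlam : lam ≠ 0) (n k : ℕ) (hkn : k ≤ n) :
    cN n ((k.factorial : ℝ)⁻¹ • (pcomp (PowerSeries.exp ℝ) (α • (degExp lam - 1)) - 1) ^ k)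
        = ∑ j ∈ Finset.Icc k n, α ^ j * S2 j k * S2d lam n j ∧
    cN n ((k.factorial : ℝ)⁻¹ • (pcomp (degLog lam) (α⁻¹ • L)) ^ k)
        = ∑ j ∈ Finset.Icc k n, α⁻¹ ^ j * S1d lam j k * S1 n j := by
  have hnf : ((n.factorial : ℝ)) ≠ 0 := Nat.cast_ne_zero.mpr n.factorial_ne_zero
  have hkf : ((k.factorial : ℝ)) ≠ 0 := Nat.cast_ne_zero.mpr k.factorial_ne_zero
  constructor
  · -- part 1
    set H : PowerSeries ℝ := α • (degExp lam - 1) with hHdef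
    have hH : PowerSeries.constantCoeff H = 0 := by
      rw [hHdef, ← PowerSeries.coeff_zero_eq_constantCoeff, PowerSeries.coeff_smul,
        PowerSeries.coeff_zero_eq_constantCoeff, constantCoeff_degExpm1, smul_zero]
    have hstep : pcomp (PowerSeries.exp ℝ) H - 1 = pcomp (PowerSeries.exp ℝ - 1) H := by
      rw [pcomp_sub, pcomp_one]
    have hpow : (pcomp (PowerSeries.exp ℝ) H - 1) ^ k = pcomp ((PowerSeries.exp ℝ - 1) ^ k) H := by
      rw [hstep, pcomp_pow hH]
    rw [hpow, cN, PowerSeries.coeff_smul, smul_eq_mul, coeff_pcomp]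
    have hHj : ∀ j : ℕ, PowerSeries.coeff n (H ^ j)
        = α ^ j * ((j.factorial : ℝ) * S2d lam n j / n.factorial) := by
      intro j
      rw [hHdef, smul_pow, PowerSeries.coeff_smul, smul_eq_mul, coeff_degExpm1_pow hlam]
    have hterm : ∀ j ∈ Finset.range (n + 1),
        (n.factorial : ℝ) * ((k.factorial : ℝ)⁻¹ *
          (PowerSeries.coeff j ((PowerSeries.exp ℝ - 1) ^ k) * PowerSeries.coeff n (H ^ j)))
        = α ^ j * S2 j k * S2d lam n j := by
      intro j _
      have hjf : ((j.factorial : ℝ)) ≠ 0 := Nat.cast_ne_zero.mpr j.factorial_ne_zero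
      rw [coeff_expm1_pow, hHj j]
      field_simp
    rw [Finset.mul_sum, Finset.mul_sum, Finset.sum_congr rfl hterm]
    refine (Finset.sum_subset ?_ ?_).symm
    · intro j hj
      rw [Finset.mem_Icc] at hj
      exact Finset.mem_range.mpr (by omega)
    · intro j hj hj2
      rw [Finset.mem_range] at hj
      rw [Finset.mem_Icc] at hj2
      have : j < k := by omega
      rw [S2_eq_zero this]
      ring
  · -- part 2
    set G : PowerSeries ℝ := α⁻¹ • L with hGdef
    have hG : PowerSeries.constantCoeff G = 0 := by
      rw [hGdef, ← PowerSeries.coeff_zero_eq_constantCoeff, PowerSeries.coeff_smul,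
        PowerSeries.coeff_zero_eq_constantCoeff, constantCoeff_L, smul_zero]
    have hpow : (pcomp (degLog lam) G) ^ k = pcomp (degLog lam ^ k) G := (pcomp_pow hG _ k).symm
    rw [hpow, cN, PowerSeries.coeff_smul, smul_eq_mul, coeff_pcomp]
    have hGj : ∀ j : ℕ, PowerSeries.coeff n (G ^ j)
        = α⁻¹ ^ j * ((j.factorial : ℝ) * S1 n j / n.factorial) := by
      intro j
      rw [hGdef, smul_pow, PowerSeries.coeff_smul, smul_eq_mul, coeff_L_pow]
    have hterm : ∀ j ∈ Finset.range (n + 1),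
        (n.factorial : ℝ) * ((k.factorial : ℝ)⁻¹ *
          (PowerSeries.coeff j (degLog lam ^ k) * PowerSeries.coeff n (G ^ j)))
        = α⁻¹ ^ j * S1d lam j k * S1 n j := by
      intro j _
      have hjf : ((j.factorial : ℝ)) ≠ 0 := Nat.cast_ne_zero.mpr j.factorial_ne_zero
      rw [hGj j, S1d_eq]
      field_simp
    rw [Finset.mul_sum, Finset.mul_sum, Finset.sum_congr rfl hterm]
    refine (Finset.sum_subset ?_ ?_).symm
    · intro j hj
      rw [Finset.mem_Icc] at hj
      exact Finset.mem_range.mpr (by omega)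
    · intro j hj hj2
      rw [Finset.mem_range] at hj
      rw [Finset.mem_Icc] at hj2
      have : j < k := by omega
      rw [S1d_eq_zero lam this]
      ring
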